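/- Let b > 0 be real, let m ≥ 0, d ≥ 1, N ≥ 0 be integers, and set r := b/(2(N+1)+m+(d+1)/2). If r < 1, then Σ_{k=N+1}^∞ (b/(2k+m+(d+1)/2))^{4k+2m+d+1} ≤ [1 + 1/(4 ln(1/r))] · r^{4N+2m+d+5}. -/

import Mathlib

open MeasureTheory Real

noncomputable section

/-- Elementary tail estimate: for `b > 0` and
`r = b/(2(N+1)+m+(d+1)/2) < 1`,
`Σ_{k=N+1}^∞ (b/(2k+m+(d+1)/2))^{4k+2m+d+1} ≤ [1 + 1/(4 ln(1/r))]·r^{4N+2m+d+5}`. -/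
theorem stmt_16 (b : ℝ) (hb : 0 < b) (m d N : ℕ) (hd : 1 ≤ d)
    (r : ℝ) (hr : r = b / (2 * ((N : ℝ) + 1) + (m : ℝ) + ((d : ℝ) + 1) / 2)) (hr1 : r < 1) :
    Summable (fun i : ℕ =>
      (b / (2 * ((N : ℝ) + 1 + (i : ℝ)) + (m : ℝ) + ((d : ℝ) + 1) / 2)) ^
        (4 * (N + 1 + i) + 2 * m + d + 1)) ∧
    (∑' i : ℕ,
      (b / (2 * ((N : ℝ) + 1 + (i : ℝ)) + (m : ℝ) + ((d : ℝ) + 1) / 2)) ^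
        (4 * (N + 1 + i) + 2 * m + d + 1)) ≤
      (1 + 1 / (4 * Real.log (1 / r))) * r ^ (4 * N + 2 * m + d + 5) := by
  have hD0 : (0:ℝ) < 2 * ((N : ℝ) + 1) + (m : ℝ) + ((d : ℝ) + 1) / 2 := by positivity
  have hr0 : 0 < r := hr ▸ div_pos hb hD0
  set C := 4 * N + 2 * m + d + 5 with hC
  set f : ℕ → ℝ := fun i =>
      (b / (2 * ((N : ℝ) + 1 + (i : ℝ)) + (m : ℝ) + ((d : ℝ) + 1) / 2)) ^
        (4 * (N + 1 + i) + 2 * m + d + 1) with hf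
  have hDpos : ∀ i : ℕ, (0:ℝ) < 2 * ((N : ℝ) + 1 + (i : ℝ)) + (m : ℝ) + ((d : ℝ) + 1) / 2 := by
    intro i; positivity
  have hfnn : ∀ i, 0 ≤ f i := by
    intro i; apply pow_nonneg; exact div_nonneg hb.le (hDpos i).le
  have hbase : ∀ i : ℕ, b / (2 * ((N : ℝ) + 1 + (i : ℝ)) + (m : ℝ) + ((d : ℝ) + 1) / 2) ≤ r := by
    intro i
    rw [hr]
    refine div_le_div_of_nonneg_left hb.le hD0 ?_
    have : (0:ℝ) ≤ (i : ℝ) := Nat.cast_nonneg i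
    linarith
  have hterm : ∀ i, f i ≤ r ^ C * (r ^ 4) ^ i := by
    intro i
    have h1 : f i ≤ r ^ (4 * (N + 1 + i) + 2 * m + d + 1) :=
      pow_le_pow_left₀ (div_nonneg hb.le (hDpos i).le) (hbase i) _
    refine h1.trans_eq ?_
    rw [← pow_mul, ← pow_add]
    congr 1
    omega
  have hr4 : r ^ 4 < 1 := pow_lt_one₀ hr0.le hr1 (by norm_num)
  have hsumg : Summable (fun i : ℕ => r ^ C * (r ^ 4) ^ i) :=
    (summable_geometric_of_lt_one (by positivity) hr4).mul_left _
  have hsumf : Summable f := Summable.of_nonneg_of_le hfnn hterm hsumg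
  refine ⟨hsumf, ?_⟩
  have htsum : (∑' i, f i) ≤ r ^ C * (1 - r ^ 4)⁻¹ := by
    calc (∑' i, f i) ≤ ∑' i, r ^ C * (r ^ 4) ^ i := Summable.tsum_le_tsum hterm hsumf hsumg
    _ = r ^ C * (1 - r ^ 4)⁻¹ := by
        rw [tsum_mul_left, tsum_geometric_of_lt_one (by positivity) hr4]
  refine htsum.trans ?_
  -- now the elementary inequality
  have hL : 0 < Real.log (1 / r) := Real.log_pos (one_lt_one_div hr0 hr1)
  set L := Real.log (1 / r) with hLdef
  have h14 : 0 < 1 - r ^ 4 := by linarith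
  have hlog : 4 * L ≤ 1 / r ^ 4 - 1 := by
    have h := Real.log_le_sub_one_of_pos (show (0:ℝ) < 1 / r ^ 4 by positivity)
    have heq : Real.log (1 / r ^ 4) = 4 * L := by
      rw [hLdef, show (1:ℝ) / r ^ 4 = (1 / r) ^ 4 by rw [div_pow, one_pow], Real.log_pow]
      norm_num
    linarith [heq ▸ h]
  have key : 4 * L * r ^ 4 ≤ 1 - r ^ 4 := by
    have hr4pos : (0:ℝ) < r ^ 4 := by positivity
    have := mul_le_mul_of_nonneg_right hlog hr4pos.le
    rw [sub_mul, div_mul_cancel₀ _ hr4pos.ne', one_mul] at this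
    linarith
  have hineq : (1 - r ^ 4)⁻¹ ≤ 1 + 1 / (4 * L) := by
    rw [inv_le_iff_one_le_mul₀ h14]
    have h4L : (0:ℝ) < 4 * L := by linarith
    have h2 : r ^ 4 ≤ (1 - r ^ 4) / (4 * L) := (le_div_iff₀ h4L).mpr (by nlinarith [key])
    have heq : (1 + 1 / (4 * L)) * (1 - r ^ 4) = (1 - r ^ 4) + (1 - r ^ 4) / (4 * L) := by
      field_simp
    rw [heq]; linarith
  calc r ^ C * (1 - r ^ 4)⁻¹ ≤ r ^ C * (1 + 1 / (4 * L)) := by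
        apply mul_le_mul_of_nonneg_left hineq (by positivity)
    _ = (1 + 1 / (4 * L)) * r ^ C := by ring

end
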